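/- Let X be a metric space, n a non-negative integer, and S a set of cardinality bigger than card(X × ℕ). The following are equivalent: (1) for each ε > 0 there is an (ε,ε)-Lipschitz partition of unity f : X → Δ(S)^(n) such that the family {f⁻¹(st(v))}_{v∈S} is uniformly bounded; (2) there exist functions α : (0,∞) → (0,∞) and M : (0,∞) × (0,∞) → (0,∞) such that LsExtDim(X, α, M) ≤ n. -/

import Mathlib

universe u

/-- The `l¹` distance between two (finitely supported) functions `S → ℝ`,
modeling the metric of `Δ(S) ⊆ l¹(S)`. -/
noncomputable def l1dist {S : Type*} (φ ψ : S → ℝ) : ℝ := ∑ᶠ v, |φ v - ψ v|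

/-- `φ` is a point of `Δ(S)`. -/
def IsDelta {S : Type*} (φ : S → ℝ) : Prop :=
  (∀ v, 0 ≤ φ v) ∧ (Function.support φ).Finite ∧ ∑ᶠ v, φ v = 1

/-- `φ` is a point of the `n`-skeleton `Δ(S)⁽ⁿ⁾`:
its support has cardinality at most `n + 1`. -/
def IsDeltaSkel {S : Type*} (n : ℕ∞) (φ : S → ℝ) : Prop :=
  IsDelta φ ∧ (Function.support φ).encard ≤ n + 1

/-- `f` is a partition of unity on `A` with values in `Δ(S)⁽ⁿ⁾`. -/
def PartUnitySkelOn {X S : Type*} (n : ℕ∞) (f : X → S → ℝ) (A : Set X) : Prop :=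
  ∀ a ∈ A, IsDeltaSkel n (f a)

/-- `f` is `(ε,ε)`-Lipschitz on `A` (with respect to the `l¹` metric on `Δ(S)`). -/
def LipschitzEpsOn {X S : Type*} [MetricSpace X] (ε : ℝ) (f : X → S → ℝ) (A : Set X) : Prop :=
  ∀ x ∈ A, ∀ y ∈ A, l1dist (f x) (f y) ≤ ε * dist x y + ε

/-- `f` is `K`-cobounded on `A`. -/
def CoboundedOn {X S : Type*} [MetricSpace X] (K : ℝ) (f : X → S → ℝ) (A : Set X) : Prop :=
  ∀ v : S, EMetric.diam {x ∈ A | 0 < f x v} ≤ ENNReal.ofReal K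

/-- `LsExtDim(X, α, M) ≤ n` (Definition 6.2). -/
def LsExtDimLE (X : Type u) [MetricSpace X] (n : ℕ∞) (Dα : Set ℝ)
    (α : ℝ → ℝ) (M : ℝ → ℝ → ℝ) : Prop :=
  ∀ S : Type u, Cardinal.mk (X × ℕ) < Cardinal.mk S →
    ∀ K : ℝ, 0 < K → ∀ δ ∈ Dα, ∀ (A : Set X) (f : X → S → ℝ),
      PartUnitySkelOn n f A → LipschitzEpsOn (α δ) f A → CoboundedOn K f A →
      ∃ g : X → S → ℝ, (∀ a ∈ A, g a = f a) ∧ PartUnitySkelOn n g Set.univ ∧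
        LipschitzEpsOn δ g Set.univ ∧ CoboundedOn (M δ K) g Set.univ


open Function
open scoped Classical

section basics
variable {S : Type*}

lemma l1dist_eq_sum (φ ψ : S → ℝ) (T : Finset S) (hφ : support φ ⊆ ↑T)
    (hψ : support ψ ⊆ ↑T) : l1dist φ ψ = ∑ v ∈ T, |φ v - ψ v| := by
  apply finsum_eq_sum_of_support_subset
  intro v hv
  by_contra hvT
  have h1 : φ v = 0 := by
    by_contra h; exact hvT (hφ h)
  have h2 : ψ v = 0 := by
    by_contra h; exact hvT (hψ h)
  simp [h1, h2] at hv

lemma finsum_eq_sum' (φ : S → ℝ) (T : Finset S) (hφ : support φ ⊆ ↑T) :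
    ∑ᶠ v, φ v = ∑ v ∈ T, φ v :=
  finsum_eq_sum_of_support_subset φ hφ

lemma l1dist_comm (φ ψ : S → ℝ) : l1dist φ ψ = l1dist ψ φ := by
  unfold l1dist
  congr 1; ext v; exact abs_sub_comm _ _

lemma IsDelta.support_nonempty {φ : S → ℝ} (h : IsDelta φ) : (support φ).Nonempty := by
  by_contra hc
  rw [Set.not_nonempty_iff_eq_empty, support_eq_empty_iff] at hc
  have := h.2.2
  rw [hc] at this
  simp at this

lemma l1dist_le_two {φ ψ : S → ℝ} (hφ : IsDelta φ) (hψ : IsDelta ψ) :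
    l1dist φ ψ ≤ 2 := by
  classical
  set T : Finset S := hφ.2.1.toFinset ∪ hψ.2.1.toFinset with hT
  have hsφ : support φ ⊆ ↑T := by
    intro v hv; simp [hT, Set.Finite.mem_toFinset]; left; exact hv
  have hsψ : support ψ ⊆ ↑T := by
    intro v hv; simp [hT, Set.Finite.mem_toFinset]; right; exact hv
  rw [l1dist_eq_sum φ ψ T hsφ hsψ]
  have h1 : ∑ v ∈ T, |φ v - ψ v| ≤ ∑ v ∈ T, (φ v + ψ v) := by
    apply Finset.sum_le_sum
    intro v _
    calc |φ v - ψ v| ≤ |φ v| + |ψ v| := abs_sub _ _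
      _ = φ v + ψ v := by rw [abs_of_nonneg (hφ.1 v), abs_of_nonneg (hψ.1 v)]
  have h2 : ∑ v ∈ T, (φ v + ψ v) = 2 := by
    rw [Finset.sum_add_distrib, ← finsum_eq_sum' φ T hsφ, ← finsum_eq_sum' ψ T hsψ,
      hφ.2.2, hψ.2.2]
    norm_num
  linarith

end basics

section push
variable {T S : Type*}

noncomputable def push (q : T → S) (φ : T → ℝ) : S → ℝ :=
  fun v => ∑ᶠ t, if q t = v then φ t else 0

variable (q : T → S) (φ ψ : T → ℝ)

lemma push_eq_sum (v : S) (T' : Finset T) (hφ : support φ ⊆ ↑T') :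
    push q φ v = ∑ t ∈ T', if q t = v then φ t else 0 := by
  apply finsum_eq_sum_of_support_subset
  intro t ht
  simp only [mem_support] at ht
  apply hφ
  intro h0
  apply ht
  simp [h0]

lemma push_nonneg (hφ : ∀ t, 0 ≤ φ t) (hfin : (support φ).Finite) (v : S) :
    0 ≤ push q φ v := by
  classical
  rw [push_eq_sum q φ v hfin.toFinset (by simp)]
  apply Finset.sum_nonneg
  intro t _
  split <;> simp [hφ t]

lemma push_support : support (push q φ) ⊆ q '' support φ := by
  intro v hv
  by_contra hc
  apply hv
  unfold push
  apply finsum_eq_zero_of_forall_eq_zero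
  intro t
  split
  · rename_i h
    by_contra hφt
    exact hc ⟨t, hφt, h⟩
  · rfl

lemma push_sum (hfin : (support φ).Finite) :
    ∑ᶠ v, push q φ v = ∑ᶠ t, φ t := by
  classical
  set T' := hfin.toFinset with hT'
  set U := T'.image q with hU
  have hsup : support (push q φ) ⊆ ↑U := by
    refine (push_support q φ).trans ?_
    intro v ⟨t, ht, hqt⟩
    simp [hU, hT']
    exact ⟨t, ht, hqt⟩
  rw [finsum_eq_sum_of_support_subset _ hsup,
      finsum_eq_sum_of_support_subset φ (show support φ ⊆ ↑T' by simp [hT'])]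
  have : ∀ v ∈ U, push q φ v = ∑ t ∈ T', if q t = v then φ t else 0 := by
    intro v _
    exact push_eq_sum q φ v T' (by simp [hT'])
  rw [Finset.sum_congr rfl this, Finset.sum_comm]
  apply Finset.sum_congr rfl
  intro t ht
  rw [Finset.sum_ite_eq U (q t) (fun _ => φ t), if_pos]
  simp [hU]
  exact ⟨t, ht, rfl⟩

lemma push_l1 (hφ : (support φ).Finite) (hψ : (support ψ).Finite) :
    ∑ᶠ v, |push q φ v - push q ψ v| ≤ ∑ᶠ t, |φ t - ψ t| := by
  classical
  set T' := hφ.toFinset ∪ hψ.toFinset with hT'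
  have hsφ : support φ ⊆ ↑T' := by intro t ht; simp [hT']; left; exact ht
  have hsψ : support ψ ⊆ ↑T' := by intro t ht; simp [hT']; right; exact ht
  set U := T'.image q with hU
  have hsup : support (fun v => |push q φ v - push q ψ v|) ⊆ ↑U := by
    intro v hv
    simp only [mem_support, ne_eq, abs_eq_zero, sub_eq_zero] at hv
    rcases (em (push q φ v = 0)) with h1 | h1
    · have h2 : push q ψ v ≠ 0 := fun h => hv (h1.trans h.symm)
      obtain ⟨t, ht, hqt⟩ := push_support q ψ h2
      simp [hU]; exact ⟨t, hsψ ht, hqt⟩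
    · obtain ⟨t, ht, hqt⟩ := push_support q φ h1
      simp [hU]; exact ⟨t, hsφ ht, hqt⟩
  rw [finsum_eq_sum_of_support_subset _ hsup]
  have hd : support (fun t => |φ t - ψ t|) ⊆ ↑T' := by
    intro t ht
    simp only [mem_support, ne_eq, abs_eq_zero, sub_eq_zero] at ht
    rcases (em (φ t = 0)) with h1 | h1
    · exact hsψ (fun h => ht (h1.trans h.symm))
    · exact hsφ h1
  rw [finsum_eq_sum_of_support_subset _ hd]
  calc ∑ v ∈ U, |push q φ v - push q ψ v|
      = ∑ v ∈ U, |∑ t ∈ T', if q t = v then φ t - ψ t else 0| := by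
        apply Finset.sum_congr rfl
        intro v _
        rw [push_eq_sum q φ v T' hsφ, push_eq_sum q ψ v T' hsψ, ← Finset.sum_sub_distrib]
        congr 1
        apply Finset.sum_congr rfl
        intro t _
        split <;> simp
    _ ≤ ∑ v ∈ U, ∑ t ∈ T', |if q t = v then φ t - ψ t else 0| := by
        apply Finset.sum_le_sum
        intro v _
        exact Finset.abs_sum_le_sum_abs _ _
    _ = ∑ t ∈ T', ∑ v ∈ U, if q t = v then |φ t - ψ t| else 0 := by
        rw [Finset.sum_comm]
        apply Finset.sum_congr rfl; intro t _
        apply Finset.sum_congr rfl; intro v _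
        split <;> simp
    _ ≤ ∑ t ∈ T', |φ t - ψ t| := by
        apply Finset.sum_le_sum
        intro t ht
        rw [Finset.sum_ite_eq U (q t) (fun _ => |φ t - ψ t|), if_pos]
        simp [hU]
        exact ⟨t, by simpa [hT'] using (Finset.mem_union.mp ht), rfl⟩

lemma push_pos (v : S) (hv : push q φ v ≠ 0) : ∃ t, q t = v ∧ φ t ≠ 0 := by
  by_contra hc
  push_neg at hc
  apply hv
  unfold push
  apply finsum_eq_zero_of_forall_eq_zero
  intro t
  split
  · rename_i h; exact hc t h
  · rfl

end push

section auxx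
variable {S : Type*}

lemma support_absdiff_subset (φ ψ : S → ℝ) :
    support (fun v => |φ v - ψ v|) ⊆ support φ ∪ support ψ := by
  intro v hv
  simp only [mem_support, ne_eq, abs_eq_zero, sub_eq_zero] at hv
  rcases em (φ v = 0) with h1 | h1
  · exact Or.inr (fun h => hv (h1.trans h.symm))
  · exact Or.inl h1

lemma abs_sub_le_l1dist {φ ψ : S → ℝ} (hφ : (support φ).Finite)
    (hψ : (support ψ).Finite) (v : S) : |φ v - ψ v| ≤ l1dist φ ψ :=
  single_le_finsum v ((hφ.union hψ).subset (support_absdiff_subset φ ψ))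
    (fun _ => abs_nonneg _)

lemma exists_heavy (n : ℕ) {φ : S → ℝ} (hφ : IsDeltaSkel (n : ℕ∞) φ) :
    ∃ v, 1/((n:ℝ)+1) ≤ φ v := by
  obtain ⟨⟨hnn, hfin, hsum⟩, hcard⟩ := hφ
  by_contra hc
  push_neg at hc
  have hcard' : hfin.toFinset.card ≤ n + 1 := by
    rw [hfin.encard_eq_coe_toFinset_card] at hcard
    have hcast : ((n + 1 : ℕ) : ℕ∞) = (n : ℕ∞) + 1 := by push_cast; ring
    rw [← hcast] at hcard
    exact_mod_cast hcard
  have hne : hfin.toFinset.Nonempty := by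
    rcases Finset.eq_empty_or_nonempty hfin.toFinset with h | h
    · exfalso
      have : ∑ᶠ v, φ v = 0 := by
        apply finsum_eq_zero_of_forall_eq_zero
        intro v
        by_contra hv
        have : v ∈ hfin.toFinset := by simp [hv]
        simp [h] at this
      rw [hsum] at this; norm_num at this
    · exact h
  have h1 : (1:ℝ) = ∑ v ∈ hfin.toFinset, φ v := by
    rw [← hsum]
    exact finsum_eq_sum_of_support_subset φ (by rw [hfin.coe_toFinset])
  have h2 : ∑ v ∈ hfin.toFinset, φ v < ∑ v ∈ hfin.toFinset, 1/((n:ℝ)+1) :=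
    Finset.sum_lt_sum_of_nonempty hne (fun v _ => hc v)
  have h3 : ∑ v ∈ hfin.toFinset, 1/((n:ℝ)+1) = hfin.toFinset.card * (1/((n:ℝ)+1)) := by
    simp [Finset.sum_const, mul_comm]
  have h4 : (hfin.toFinset.card : ℝ) * (1/((n:ℝ)+1)) ≤ ((n:ℝ)+1) * (1/((n:ℝ)+1)) := by
    apply mul_le_mul_of_nonneg_right _ (by positivity)
    exact_mod_cast hcard'
  have h5 : ((n:ℝ)+1) * (1/((n:ℝ)+1)) = 1 := by
    field_simp
  rw [h3] at h2
  linarith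

lemma dist_le_of_diam_le {X : Type*} [MetricSpace X] {U : Set X} {B : ℝ} (hB : 0 ≤ B)
    (hU : EMetric.diam U ≤ ENNReal.ofReal B) {x y : X} (hx : x ∈ U) (hy : y ∈ U) :
    dist x y ≤ B := by
  have h1 : edist x y ≤ ENNReal.ofReal B := (EMetric.edist_le_diam_of_mem hx hy).trans hU
  rw [edist_dist] at h1
  have := ENNReal.toReal_mono (by simp) h1
  rwa [ENNReal.toReal_ofReal dist_nonneg, ENNReal.toReal_ofReal hB] at this

lemma infDist_lip {X : Type*} [MetricSpace X] (A : Set X) (x y : X) :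
    |Metric.infDist x A - Metric.infDist y A| ≤ dist x y := by
  rw [abs_le]
  constructor
  · have := Metric.infDist_le_infDist_add_dist (s := A) (x := y) (y := x)
    rw [dist_comm] at this
    linarith
  · have := Metric.infDist_le_infDist_add_dist (s := A) (x := x) (y := y)
    linarith

end auxx



section core

variable {X S' T : Type*} [MetricSpace X]

set_option maxHeartbeats 1000000 in
lemma core (n : ℕ) (δ K B αv : ℝ)
    (hδ : 0 < δ) (hK : 0 < K) (hB : 0 < B) (hα0 : 0 < αv)
    (hα1 : αv ≤ δ/2)
    (hα2 : αv * (3*(8/δ) + B + 3) ≤ 1/(2*((n:ℝ)+1)))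
    (hα3 : αv * (3*(8/δ) + 4) ≤ δ/10)
    (A : Set X) (hA : A.Nonempty) (f : X → S' → ℝ) (h : X → T → ℝ)
    (e : (⋃ x, support (h x)) → S') (he_inj : Function.Injective e)
    (he_W : ∀ t, ∀ c ∈ A, f c (e t) = 0)
    (hfPU : PartUnitySkelOn (n : ℕ∞) f A)
    (hfLip : LipschitzEpsOn αv f A)
    (hfCob : CoboundedOn K f A)
    (hhPU : PartUnitySkelOn (n : ℕ∞) h Set.univ)
    (hhLip : LipschitzEpsOn (δ/4) h Set.univ)
    (hhCob : CoboundedOn B h Set.univ) :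
    ∃ g : X → S' → ℝ, (∀ c ∈ A, g c = f c) ∧ PartUnitySkelOn (n:ℕ∞) g Set.univ ∧
      LipschitzEpsOn δ g Set.univ ∧ CoboundedOn (K + 2*B + 4*(8/δ) + 3) g Set.univ := by
  classical
  set s : ℝ := 8/δ with hs_def
  have hs : 0 < s := by positivity
  set dA : X → ℝ := fun x => Metric.infDist x A with hdA_def
  have hdA0 : ∀ x, 0 ≤ dA x := fun x => Metric.infDist_nonneg
  have hdAlip : ∀ x y, |dA x - dA y| ≤ dist x y := fun x y => infDist_lip A x y
  -- anchor map
  have hanchor : ∀ x : X, ∃ y, y ∈ A ∧ dist x y ≤ dA x + 1 ∧ (x ∈ A → y = x) := by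
    intro x
    by_cases hx : x ∈ A
    · refine ⟨x, hx, ?_, fun _ => rfl⟩
      simp only [dist_self]
      linarith [hdA0 x]
    · obtain ⟨y, hyA, hyd⟩ := (Metric.infDist_lt_iff hA).mp
        (show Metric.infDist x A < dA x + 1 by
          simp only [hdA_def]; linarith [hdA0 x])
      exact ⟨y, hyA, le_of_lt hyd, fun hxA => absurd hxA hx⟩
  choose a haA had haid using hanchor
  -- cutoff
  set lam : X → ℝ := fun x => min (dA x / s) 1 with hlam_def
  have hlam0 : ∀ x, 0 ≤ lam x := fun x => le_min (div_nonneg (hdA0 x) hs.le) zero_le_one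
  have hlam1 : ∀ x, lam x ≤ 1 := fun x => min_le_right _ _
  have hlamlip : ∀ x y, |lam x - lam y| ≤ dist x y / s := by
    intro x y
    have h1 : |lam x - lam y| ≤ |dA x / s - dA y / s| :=
      (abs_min_sub_min_le_max _ _ _ _).trans (by simp)
    have h2 : |dA x / s - dA y / s| = |dA x - dA y| / s := by
      rw [div_sub_div_same, abs_div, abs_of_pos hs]
    rw [h2] at h1
    refine h1.trans ?_
    exact (div_le_div_iff_of_pos_right hs).mpr (hdAlip x y)
  have hlam_memA : ∀ x ∈ A, lam x = 0 := by
    intro x hx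
    simp only [hlam_def, hdA_def, Metric.infDist_zero_of_mem hx, zero_div]
    simp
  have hlam_lt_one : ∀ x, lam x < 1 → dA x < s := by
    intro x hx
    by_contra hc
    push_neg at hc
    have : lam x = 1 := min_eq_right ((one_le_div hs).mpr hc)
    rw [this] at hx; exact lt_irrefl 1 hx
  have hlam_one : ∀ x, s ≤ dA x → lam x = 1 :=
    fun x hx => min_eq_right ((one_le_div hs).mpr hx)
  -- facts about h and f
  have hhD : ∀ x, IsDelta (h x) := fun x => (hhPU x (Set.mem_univ x)).1
  have hfD : ∀ c (_ : c ∈ A), IsDelta (f c) := fun c hc => (hfPU c hc).1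
  -- star diameter of h
  have hstar : ∀ (t : T) (x y : X), 0 < h x t → 0 < h y t → dist x y ≤ B := by
    intro t x y hx hy
    exact dist_le_of_diam_le hB.le (hhCob t) ⟨Set.mem_univ x, hx⟩ ⟨Set.mem_univ y, hy⟩
  -- near vertices
  set Near : T → Prop := fun t => ∃ x, 0 < h x t ∧ dA x ≤ 2*s with hNear_def
  have hnearc : ∀ t, Near t → ∃ x, 0 < h x t ∧ dA x ≤ 2*s := fun t ht => ht
  choose xt hxt1 hxt2 using hnearc
  -- heavy vertices
  have hheavy : ∀ c, c ∈ A → ∃ v, 1/((n:ℝ)+1) ≤ f c v :=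
    fun c hc => exists_heavy n (hfPU c hc)
  choose hv hhv using hheavy
  -- the vertex map
  set p : T → S' := fun t =>
    if hn : Near t then hv (a (xt t hn)) (haA _)
    else if hV : t ∈ ⋃ z, support (h z) then e ⟨t, hV⟩ else hv (a hA.choose) (haA _)
    with hp_def
  set G : X → S' → ℝ := fun x => push p (h x) with hG_def
  set g : X → S' → ℝ := fun x v => (1 - lam x) * f (a x) v + lam x * G x v with hg_def
  -- basic facts on G
  have hGfin : ∀ x, (support (G x)).Finite :=
    fun x => (((hhD x).2.1).image p).subset (push_support p (h x))
  have hGnn : ∀ x v, 0 ≤ G x v :=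
    fun x v => push_nonneg p (h x) (hhD x).1 (hhD x).2.1 v
  have hGsum : ∀ x, ∑ᶠ v, G x v = 1 :=
    fun x => (push_sum p (h x) (hhD x).2.1).trans (hhD x).2.2
  have hGl1 : ∀ x y, l1dist (G x) (G y) ≤ l1dist (h x) (h y) :=
    fun x y => push_l1 p (h x) (h y) (hhD x).2.1 (hhD y).2.1
  -- basic facts on g
  have hsuppg : ∀ x, support (g x) ⊆ support (f (a x)) ∪ support (G x) := by
    intro x v hv'
    by_contra hc
    simp only [Set.mem_union, mem_support, not_or, not_not] at hc
    apply hv'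
    simp only [hg_def, hc.1, hc.2, mul_zero, add_zero]
  have hgfin : ∀ x, (support (g x)).Finite :=
    fun x => (((hfD _ (haA x)).2.1).union (hGfin x)).subset (hsuppg x)
  have hgnn : ∀ x v, 0 ≤ g x v := by
    intro x v
    have h1 := (hfD _ (haA x)).1 v
    have h2 := hGnn x v
    have h3 := hlam0 x
    have h4 := hlam1 x
    simp only [hg_def]
    nlinarith
  have hgsum : ∀ x, ∑ᶠ v, g x v = 1 := by
    intro x
    set U : Finset S' := ((hfD _ (haA x)).2.1.toFinset ∪ (hGfin x).toFinset) with hU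
    have hUf : support (f (a x)) ⊆ ↑U := by
      intro v hv'
      simp only [hU, Finset.coe_union, Set.Finite.coe_toFinset, Set.mem_union]
      exact Or.inl hv'
    have hUG : support (G x) ⊆ ↑U := by
      intro v hv'
      simp only [hU, Finset.coe_union, Set.Finite.coe_toFinset, Set.mem_union]
      exact Or.inr hv'
    have hUg : support (g x) ⊆ ↑U := (hsuppg x).trans (Set.union_subset hUf hUG)
    rw [finsum_eq_sum' (g x) U hUg]
    have hexp : ∑ v ∈ U, g x v
        = (1 - lam x) * ∑ v ∈ U, f (a x) v + lam x * ∑ v ∈ U, G x v := by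
      rw [Finset.mul_sum, Finset.mul_sum, ← Finset.sum_add_distrib]
    rw [hexp, ← finsum_eq_sum' _ U hUf, ← finsum_eq_sum' _ U hUG,
      (hfD _ (haA x)).2.2, hGsum x]
    ring
  have hgD : ∀ x, IsDelta (g x) := fun x => ⟨hgnn x, hgfin x, hgsum x⟩
  -- key support claim in the transition zone
  have hkey : ∀ x, dA x < s → support (G x) ⊆ support (f (a x)) := by
    intro x hx v hvG
    obtain ⟨t, hpt, hht⟩ := push_pos p (h x) v hvG
    have hht' : 0 < h x t := lt_of_le_of_ne ((hhD x).1 t) (Ne.symm hht)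
    have hn : Near t := ⟨x, hht', by linarith⟩
    have hpt' : p t = hv (a (xt t hn)) (haA _) := by
      simp only [hp_def]; rw [dif_pos hn]
    have hcA : a (xt t hn) ∈ A := haA _
    have hheavyc : 1/((n:ℝ)+1) ≤ f (a (xt t hn)) (p t) := by
      rw [hpt']; exact hhv _ hcA
    have hd1 : dist (xt t hn) (a (xt t hn)) ≤ 2*s + 1 := by
      have h5 := had (xt t hn); have h6 := hxt2 t hn; linarith
    have hd2 : dist x (xt t hn) ≤ B := hstar t x (xt t hn) hht' (hxt1 t hn)
    have hd3 : dist x (a x) ≤ s + 1 := by have h5 := had x; linarith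
    have hdist : dist (a (xt t hn)) (a x) ≤ 3*s + B + 2 := by
      have h4 := dist_triangle4 (a (xt t hn)) (xt t hn) x (a x)
      rw [dist_comm (a (xt t hn)) (xt t hn), dist_comm (xt t hn) x] at h4
      linarith
    have hl1 : l1dist (f (a (xt t hn))) (f (a x)) ≤ αv * (3*s + B + 2) + αv := by
      refine (hfLip _ hcA _ (haA x)).trans ?_
      have := mul_le_mul_of_nonneg_left hdist hα0.le
      linarith
    have habs : |f (a (xt t hn)) (p t) - f (a x) (p t)| ≤ αv * (3*s + B + 3) := by
      refine (abs_sub_le_l1dist (hfD _ hcA).2.1 (hfD _ (haA x)).2.1 (p t)).trans ?_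
      refine hl1.trans ?_
      ring_nf
      linarith
    have hhalf : αv * (3*s + B + 3) ≤ 1/(2*((n:ℝ)+1)) := by
      rw [hs_def] at *
      exact hα2
    have hfrac : 1/((n:ℝ)+1) = 2 * (1/(2*((n:ℝ)+1))) := by
      have hne : ((n:ℝ)+1) ≠ 0 := by positivity
      field_simp
    have hpos : 0 < f (a x) (p t) := by
      have h7 : f (a (xt t hn)) (p t) - f (a x) (p t) ≤ 1/(2*((n:ℝ)+1)) := by
        have := le_abs_self (f (a (xt t hn)) (p t) - f (a x) (p t))
        linarith
      have h8 : 0 < 1/(2*((n:ℝ)+1)) := by positivity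
      linarith [hheavyc, hfrac ▸ hheavyc]
    rw [← hpt]
    exact ne_of_gt hpos
  -- the skeleton bound
  have hGskel : ∀ x, (support (G x)).encard ≤ (n:ℕ∞) + 1 := by
    intro x
    calc (support (G x)).encard ≤ (p '' support (h x)).encard :=
          Set.encard_le_encard (push_support p (h x))
      _ ≤ (support (h x)).encard := Set.encard_image_le _ _
      _ ≤ (n:ℕ∞)+1 := (hhPU x (Set.mem_univ x)).2
  have hgskel : ∀ x, (support (g x)).encard ≤ (n:ℕ∞) + 1 := by
    intro x
    by_cases hl1x : lam x = 1
    · have hgeq : g x = G x := by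
        funext v
        simp only [hg_def, hl1x]
        ring
      rw [hgeq]
      exact hGskel x
    · by_cases hl0x : lam x = 0
      · have hgeq : g x = f (a x) := by
          funext v
          simp only [hg_def, hl0x]
          ring
        rw [hgeq]
        exact (hfPU _ (haA x)).2
      · have hlt : dA x < s := hlam_lt_one x (lt_of_le_of_ne (hlam1 x) hl1x)
        have hsub : support (g x) ⊆ support (f (a x)) :=
          (hsuppg x).trans (Set.union_subset subset_rfl (hkey x hlt))
        exact (Set.encard_le_encard hsub).trans (hfPU _ (haA x)).2
  -- Lipschitz estimate
  have hkeyLip : ∀ x y, dA x ≤ dA y → l1dist (g x) (g y) ≤ δ * dist x y + δ := by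
    intro x y hxy
    have hd0 : (0:ℝ) ≤ dist x y := dist_nonneg
    by_cases hx1 : s ≤ dA x
    · have hlx := hlam_one x hx1
      have hly := hlam_one y (le_trans hx1 hxy)
      have hgeqx : g x = G x := by funext v; simp only [hg_def, hlx]; ring
      have hgeqy : g y = G y := by funext v; simp only [hg_def, hly]; ring
      rw [hgeqx, hgeqy]
      have h5 := hhLip x (Set.mem_univ x) y (Set.mem_univ y)
      have h6 := hGl1 x y
      nlinarith
    · push_neg at hx1
      by_cases hy2 : dA y ≤ 2*s
      · -- main interpolation estimate
        set U : Finset S' :=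
          (((hfD _ (haA x)).2.1.toFinset ∪ (hfD _ (haA y)).2.1.toFinset) ∪
            ((hGfin x).toFinset ∪ (hGfin y).toFinset)) with hU
        have hUfx : support (f (a x)) ⊆ ↑U := by
          intro v hv'
          simp only [hU, Finset.coe_union, Set.Finite.coe_toFinset, Set.mem_union]
          exact Or.inl (Or.inl hv')
        have hUfy : support (f (a y)) ⊆ ↑U := by
          intro v hv'
          simp only [hU, Finset.coe_union, Set.Finite.coe_toFinset, Set.mem_union]
          exact Or.inl (Or.inr hv')
        have hUGx : support (G x) ⊆ ↑U := by
          intro v hv'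
          simp only [hU, Finset.coe_union, Set.Finite.coe_toFinset, Set.mem_union]
          exact Or.inr (Or.inl hv')
        have hUGy : support (G y) ⊆ ↑U := by
          intro v hv'
          simp only [hU, Finset.coe_union, Set.Finite.coe_toFinset, Set.mem_union]
          exact Or.inr (Or.inr hv')
        have hUgx : support (g x) ⊆ ↑U := (hsuppg x).trans (Set.union_subset hUfx hUGx)
        have hUgy : support (g y) ⊆ ↑U := (hsuppg y).trans (Set.union_subset hUfy hUGy)
        rw [l1dist_eq_sum (g x) (g y) U hUgx hUgy]
        have hptw : ∀ v ∈ U, |g x v - g y v| ≤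
            |f (a x) v - f (a y) v| + |G x v - G y v|
              + |lam x - lam y| * (f (a y) v + G y v) := by
          intro v _
          have hexp : g x v - g y v = (1 - lam x) * (f (a x) v - f (a y) v)
              + lam x * (G x v - G y v) + (lam y - lam x) * (f (a y) v - G y v) := by
            simp only [hg_def]; ring
          rw [hexp]
          have e1 : |(1 - lam x) * (f (a x) v - f (a y) v)| ≤ |f (a x) v - f (a y) v| := by
            rw [abs_mul, abs_of_nonneg (by linarith [hlam1 x] : (0:ℝ) ≤ 1 - lam x)]
            nlinarith [abs_nonneg (f (a x) v - f (a y) v), hlam0 x, hlam1 x]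
          have e2 : |lam x * (G x v - G y v)| ≤ |G x v - G y v| := by
            rw [abs_mul, abs_of_nonneg (hlam0 x)]
            nlinarith [abs_nonneg (G x v - G y v), hlam0 x, hlam1 x]
          have e3 : |(lam y - lam x) * (f (a y) v - G y v)| ≤
              |lam x - lam y| * (f (a y) v + G y v) := by
            rw [abs_mul, abs_sub_comm (lam y) (lam x)]
            apply mul_le_mul_of_nonneg_left _ (abs_nonneg _)
            have := (hfD _ (haA y)).1 v
            have := hGnn y v
            rw [abs_sub_comm]
            calc |G y v - f (a y) v| ≤ |G y v| + |f (a y) v| := abs_sub _ _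
              _ = f (a y) v + G y v := by
                  rw [abs_of_nonneg (hGnn y v), abs_of_nonneg ((hfD _ (haA y)).1 v)]
                  ring
          calc |(1 - lam x) * (f (a x) v - f (a y) v)
              + lam x * (G x v - G y v) + (lam y - lam x) * (f (a y) v - G y v)|
              ≤ |(1 - lam x) * (f (a x) v - f (a y) v) + lam x * (G x v - G y v)|
                + |(lam y - lam x) * (f (a y) v - G y v)| := abs_add_le _ _
            _ ≤ |(1 - lam x) * (f (a x) v - f (a y) v)| + |lam x * (G x v - G y v)|
                + |(lam y - lam x) * (f (a y) v - G y v)| := by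
                  have := abs_add_le ((1 - lam x) * (f (a x) v - f (a y) v))
                    (lam x * (G x v - G y v))
                  linarith
            _ ≤ _ := by linarith
        have hsum1 : ∑ v ∈ U, |g x v - g y v| ≤
            ∑ v ∈ U, (|f (a x) v - f (a y) v| + |G x v - G y v|
              + |lam x - lam y| * (f (a y) v + G y v)) :=
          Finset.sum_le_sum hptw
        have hsplit : ∑ v ∈ U, (|f (a x) v - f (a y) v| + |G x v - G y v|
              + |lam x - lam y| * (f (a y) v + G y v))
            = (∑ v ∈ U, |f (a x) v - f (a y) v|) + (∑ v ∈ U, |G x v - G y v|)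
              + |lam x - lam y| * ((∑ v ∈ U, f (a y) v) + (∑ v ∈ U, G y v)) := by
          rw [Finset.sum_add_distrib, Finset.sum_add_distrib, ← Finset.mul_sum,
            Finset.sum_add_distrib]
        have hf1 : ∑ v ∈ U, |f (a x) v - f (a y) v| = l1dist (f (a x)) (f (a y)) :=
          (l1dist_eq_sum _ _ U hUfx hUfy).symm
        have hG1 : ∑ v ∈ U, |G x v - G y v| = l1dist (G x) (G y) :=
          (l1dist_eq_sum _ _ U hUGx hUGy).symm
        have hfy1 : ∑ v ∈ U, f (a y) v = 1 := by
          rw [← finsum_eq_sum' _ U hUfy]; exact (hfD _ (haA y)).2.2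
        have hGy1 : ∑ v ∈ U, G y v = 1 := by
          rw [← finsum_eq_sum' _ U hUGy]; exact hGsum y
        -- bound each piece
        have hbf : l1dist (f (a x)) (f (a y)) ≤ αv * dist x y + αv * (3*s + 3) := by
          refine (hfLip _ (haA x) _ (haA y)).trans ?_
          have hda : dist (a x) (a y) ≤ dist x y + 3*s + 2 := by
            have h4 := dist_triangle4 (a x) x y (a y)
            rw [dist_comm (a x) x] at h4
            have h5 := had x
            have h6 := had y
            linarith
          have := mul_le_mul_of_nonneg_left hda hα0.le
          linarith
        have hbG : l1dist (G x) (G y) ≤ δ/4 * dist x y + δ/4 :=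
          (hGl1 x y).trans (hhLip x (Set.mem_univ x) y (Set.mem_univ y))
        have hblam : |lam x - lam y| * ((1:ℝ) + 1) ≤ δ/4 * dist x y := by
          have h7 := hlamlip x y
          have h8 : dist x y / s * 2 = δ/4 * dist x y := by
            rw [hs_def]
            field_simp
            ring
          have h9 : |lam x - lam y| * 2 ≤ dist x y / s * 2 := by
            nlinarith [abs_nonneg (lam x - lam y)]
          linarith
        have hfinal : l1dist (f (a x)) (f (a y)) + l1dist (G x) (G y)
            + |lam x - lam y| * (1 + 1) ≤ δ * dist x y + δ := by
          have h10 : αv * (3*s+3) + δ/4 ≤ δ := by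
            have : αv * (3*s+3) ≤ αv * (3*s+4) := by nlinarith
            rw [hs_def] at this ⊢
            linarith [hα3]
          have h11 : αv * dist x y ≤ δ/2 * dist x y := by nlinarith
          linarith [hbf, hbG, hblam]
        rw [hf1, hG1, hfy1, hGy1] at hsplit
        linarith [hsum1, hsplit ▸ hsum1]
      · push_neg at hy2
        have hdbig : s < dist x y := by
          have h7 := hdAlip x y
          have h8 : dA y - dA x ≤ dist x y := by
            have := neg_abs_le (dA x - dA y)
            linarith
          linarith
        have h2le : l1dist (g x) (g y) ≤ 2 := l1dist_le_two (hgD x) (hgD y)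
        have h9 : δ * s = 8 := by
          rw [hs_def]; field_simp
        nlinarith
  -- conclusion
  refine ⟨g, ?_, ?_, ?_, ?_⟩
  · intro c hc
    funext v
    simp only [hg_def, hlam_memA c hc, haid c hc]
    ring
  · exact fun x _ => ⟨hgD x, hgskel x⟩
  · intro x _ y _
    rcases le_total (dA x) (dA y) with hc | hc
    · exact hkeyLip x y hc
    · rw [l1dist_comm, dist_comm]
      exact hkeyLip y x hc
  · -- coboundedness
    intro v
    have hmem : ∀ x, 0 < g x v →
        (∃ c, c ∈ A ∧ 0 < f c v ∧ dist x c ≤ B + 2*s + 1) ∨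
        (∃ (t : T) (hV : t ∈ ⋃ z, support (h z)), v = e ⟨t, hV⟩ ∧ 0 < h x t) := by
      intro x hx
      have hsplit : 0 < (1 - lam x) * f (a x) v ∨ 0 < lam x * G x v := by
        by_contra hc
        push_neg at hc
        have : g x v ≤ 0 := by
          simp only [hg_def]
          linarith [hc.1, hc.2]
        simp only [hg_def] at hx
        linarith
      rcases hsplit with h1 | h1
      · left
        have hlamx : lam x < 1 := by
          by_contra hcl
          push_neg at hcl
          have : lam x = 1 := le_antisymm (hlam1 x) hcl
          rw [this] at h1
          simp at h1
        have hF : 0 < f (a x) v := by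
          rcases lt_trichotomy (f (a x) v) 0 with hlt | heq | hgt
          · exact absurd hlt (not_lt.mpr ((hfD _ (haA x)).1 v))
          · rw [heq] at h1; simp at h1
          · exact hgt
        have hxs : dA x < s := hlam_lt_one x hlamx
        refine ⟨a x, haA x, hF, ?_⟩
        have := had x
        linarith
      · have hlamxpos : 0 < lam x := by
          rcases lt_trichotomy (lam x) 0 with hlt | heq | hgt
          · exact absurd hlt (not_lt.mpr (hlam0 x))
          · rw [heq] at h1; simp at h1
          · exact hgt
        have hGpos : 0 < G x v := by
          rcases lt_trichotomy (G x v) 0 with hlt | heq | hgt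
          · exact absurd hlt (not_lt.mpr (hGnn x v))
          · rw [heq] at h1; simp at h1
          · exact hgt
        obtain ⟨t, hpt, hht⟩ := push_pos p (h x) v (ne_of_gt hGpos)
        have hht' : 0 < h x t := lt_of_le_of_ne ((hhD x).1 t) (Ne.symm hht)
        by_cases hn : Near t
        · left
          have hpt' : p t = hv (a (xt t hn)) (haA _) := by
            simp only [hp_def]; rw [dif_pos hn]
          refine ⟨a (xt t hn), haA _, ?_, ?_⟩
          · have h12 := hhv (a (xt t hn)) (haA _)
            have h13 : 0 < 1/((n:ℝ)+1) := by positivity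
            rw [← hpt, hpt']
            linarith
          · have hd1 : dist (xt t hn) (a (xt t hn)) ≤ 2*s + 1 := by
              have h5 := had (xt t hn); have h6 := hxt2 t hn; linarith
            have hd2 : dist x (xt t hn) ≤ B := hstar t x (xt t hn) hht' (hxt1 t hn)
            have := dist_triangle x (xt t hn) (a (xt t hn))
            linarith
        · right
          have hVt : t ∈ ⋃ z, support (h z) :=
            Set.mem_iUnion.mpr ⟨x, ne_of_gt hht'⟩
          have hpt' : p t = e ⟨t, hVt⟩ := by
            simp only [hp_def]
            rw [dif_neg hn, dif_pos hVt]
          exact ⟨t, hVt, by rw [← hpt, hpt'], hht'⟩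
    apply EMetric.diam_le
    rintro x ⟨-, hx⟩ y ⟨-, hy⟩
    have hMnn : (0:ℝ) ≤ K + 2*B + 4*(8/δ) + 3 := by
      have : (0:ℝ) < 8/δ := by positivity
      linarith
    rcases hmem x hx with ⟨cx, hcxA, hcxf, hcxd⟩ | ⟨t, hVt, hvt, hhxt⟩
    · rcases hmem y hy with ⟨cy, hcyA, hcyf, hcyd⟩ | ⟨t, hVt, hvt, hhyt⟩
      · have e1 : edist x cx ≤ ENNReal.ofReal (B + 2*s + 1) := by
          rw [edist_dist]
          exact ENNReal.ofReal_le_ofReal hcxd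
        have e2 : edist cx cy ≤ ENNReal.ofReal K := by
          refine (EMetric.edist_le_diam_of_mem ?_ ?_).trans (hfCob v)
          · exact ⟨hcxA, hcxf⟩
          · exact ⟨hcyA, hcyf⟩
        have e3 : edist cy y ≤ ENNReal.ofReal (B + 2*s + 1) := by
          rw [edist_dist, dist_comm]
          exact ENNReal.ofReal_le_ofReal hcyd
        have htri : edist x y ≤ edist x cx + edist cx cy + edist cy y :=
          edist_triangle4 x cx cy y
        have hsum : edist x y ≤ ENNReal.ofReal (B + 2*s + 1) + ENNReal.ofReal K
            + ENNReal.ofReal (B + 2*s + 1) := by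
          refine htri.trans ?_
          gcongr
        refine hsum.trans ?_
        rw [← ENNReal.ofReal_add (by linarith) hK.le, ← ENNReal.ofReal_add (by positivity) (by linarith)]
        apply ENNReal.ofReal_le_ofReal
        rw [hs_def]
        ring_nf
        linarith
      · exfalso
        have := he_W ⟨t, hVt⟩ cx hcxA
        rw [← hvt] at this
        linarith
    · rcases hmem y hy with ⟨cy, hcyA, hcyf, hcyd⟩ | ⟨t', hVt', hvt', hhyt⟩
      · exfalso
        have := he_W ⟨t, hVt⟩ cy hcyA
        rw [← hvt] at this
        linarith
      · have hsame : (⟨t, hVt⟩ : ↥(⋃ z, support (h z))) = ⟨t', hVt'⟩ :=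
          he_inj (by rw [← hvt, ← hvt'])
        have htt : t = t' := congrArg Subtype.val hsame
        subst htt
        have hmemx : x ∈ {z | z ∈ Set.univ ∧ 0 < h z t} := ⟨Set.mem_univ x, hhxt⟩
        have hmemy : y ∈ {z | z ∈ Set.univ ∧ 0 < h z t} := ⟨Set.mem_univ y, hhyt⟩
        refine ((EMetric.edist_le_diam_of_mem hmemx hmemy).trans (hhCob t)).trans ?_
        apply ENNReal.ofReal_le_ofReal
        have : (0:ℝ) < 8/δ := by positivity
        linarith

end core


section coreEmpty

lemma core_empty {X S' T : Type*} [MetricSpace X] (n : ℕ) (δ B Mv : ℝ)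
    (hδ : 0 < δ) (hB : 0 < B) (hBM : B ≤ Mv)
    (h : X → T → ℝ)
    (e : (⋃ x, support (h x)) → S') (he_inj : Function.Injective e)
    [Nonempty S']
    (hhPU : PartUnitySkelOn (n : ℕ∞) h Set.univ)
    (hhLip : LipschitzEpsOn (δ/4) h Set.univ)
    (hhCob : CoboundedOn B h Set.univ) :
    ∃ g : X → S' → ℝ, PartUnitySkelOn (n:ℕ∞) g Set.univ ∧
      LipschitzEpsOn δ g Set.univ ∧ CoboundedOn Mv g Set.univ := by
  classical
  set p : T → S' := fun t =>
    if hV : t ∈ ⋃ z, support (h z) then e ⟨t, hV⟩ else Classical.arbitrary S'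
    with hp_def
  have hhD : ∀ x, IsDelta (h x) := fun x => (hhPU x (Set.mem_univ x)).1
  set g : X → S' → ℝ := fun x => push p (h x) with hg_def
  have hgfin : ∀ x, (support (g x)).Finite :=
    fun x => (((hhD x).2.1).image p).subset (push_support p (h x))
  refine ⟨g, ?_, ?_, ?_⟩
  · intro x _
    refine ⟨⟨fun v => push_nonneg p (h x) (hhD x).1 (hhD x).2.1 v, hgfin x,
      (push_sum p (h x) (hhD x).2.1).trans (hhD x).2.2⟩, ?_⟩
    calc (support (g x)).encard ≤ (p '' support (h x)).encard :=
          Set.encard_le_encard (push_support p (h x))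
      _ ≤ (support (h x)).encard := Set.encard_image_le _ _
      _ ≤ (n:ℕ∞)+1 := (hhPU x (Set.mem_univ x)).2
  · intro x _ y _
    have h5 := hhLip x (Set.mem_univ x) y (Set.mem_univ y)
    have h6 := push_l1 p (h x) (h y) (hhD x).2.1 (hhD y).2.1
    have hd0 : (0:ℝ) ≤ dist x y := dist_nonneg
    have : l1dist (g x) (g y) ≤ l1dist (h x) (h y) := h6
    nlinarith
  · intro v
    apply EMetric.diam_le
    rintro x ⟨-, hx⟩ y ⟨-, hy⟩
    obtain ⟨t, hpt, hht⟩ := push_pos p (h x) v (ne_of_gt hx)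
    obtain ⟨t', hpt', hht'⟩ := push_pos p (h y) v (ne_of_gt hy)
    have hht2 : 0 < h x t := lt_of_le_of_ne ((hhD x).1 t) (Ne.symm hht)
    have hht2' : 0 < h y t' := lt_of_le_of_ne ((hhD y).1 t') (Ne.symm hht')
    have hVt : t ∈ ⋃ z, support (h z) := Set.mem_iUnion.mpr ⟨x, hht⟩
    have hVt' : t' ∈ ⋃ z, support (h z) := Set.mem_iUnion.mpr ⟨y, hht'⟩
    have h7 : p t = e ⟨t, hVt⟩ := by simp only [hp_def]; rw [dif_pos hVt]
    have h8 : p t' = e ⟨t', hVt'⟩ := by simp only [hp_def]; rw [dif_pos hVt']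
    have hsame : (⟨t, hVt⟩ : ↥(⋃ z, support (h z))) = ⟨t', hVt'⟩ :=
      he_inj (by rw [← h7, ← h8, hpt, hpt'])
    have htt : t = t' := congrArg Subtype.val hsame
    subst htt
    have hmemx : x ∈ {z | z ∈ Set.univ ∧ 0 < h z t} := ⟨Set.mem_univ x, hht2⟩
    have hmemy : y ∈ {z | z ∈ Set.univ ∧ 0 < h z t} := ⟨Set.mem_univ y, hht2'⟩
    exact ((EMetric.edist_le_diam_of_mem hmemx hmemy).trans (hhCob t)).trans
      (ENNReal.ofReal_le_ofReal hBM)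

end coreEmpty

section cardinality

universe v

lemma card_union_supports {I S : Type v} (h : I → S → ℝ)
    (hfin : ∀ i, (support (h i)).Finite) :
    Cardinal.mk ↥(⋃ i, support (h i)) ≤ Cardinal.mk I * Cardinal.aleph0 := by
  calc Cardinal.mk ↥(⋃ i, support (h i))
      ≤ Cardinal.sum (fun i => Cardinal.mk ↥(support (h i))) :=
        Cardinal.mk_iUnion_le_sum_mk
    _ ≤ Cardinal.sum (fun _ : I => Cardinal.aleph0) := by
        apply Cardinal.sum_le_sum
        intro i
        exact Cardinal.mk_le_aleph0_iff.mpr ((hfin i).countable.to_subtype)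
    _ = Cardinal.mk I * Cardinal.aleph0 := Cardinal.sum_const' _ _

lemma card_prod_nat (X : Type u) :
    Cardinal.mk (X × ℕ) = Cardinal.mk X * Cardinal.aleph0 := by
  rw [Cardinal.mk_prod]
  simp

end cardinality

/-- Theorem 6.4 for finite `n`. For a metric space `X`, `n ∈ ℕ`, and a
set `S` of cardinality bigger than `card(X × ℕ)`, the following are equivalent:
(1) for each `ε > 0` there is an `(ε,ε)`-Lipschitz partition of unity `f : X → Δ(S)⁽ⁿ⁾`
with `{f⁻¹(st v)}` uniformly bounded; (2) there are `α : (0,∞) → (0,∞)` and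
`M : (0,∞) × (0,∞) → (0,∞)` with `LsExtDim(X, α, M) ≤ n`. -/
theorem stmt10 {X : Type u} [MetricSpace X] (n : ℕ) (S : Type u)
    (hS : Cardinal.mk (X × ℕ) < Cardinal.mk S) :
    (∀ ε > (0:ℝ), ∃ f : X → S → ℝ, PartUnitySkelOn (n : ℕ∞) f Set.univ ∧
      LipschitzEpsOn ε f Set.univ ∧ ∃ M' : ℝ, 0 < M' ∧ CoboundedOn M' f Set.univ) ↔
    (∃ α : ℝ → ℝ, ∃ M : ℝ → ℝ → ℝ, (∀ δ > (0:ℝ), 0 < α δ) ∧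
      (∀ δ > (0:ℝ), ∀ K > (0:ℝ), 0 < M δ K) ∧ LsExtDimLE X (n : ℕ∞) (Set.Ioi 0) α M) := by
  constructor
  · -- forward direction
    intro H1
    classical
    choose h0 hPU0 hLip0 B0 hB0 hCob0 using H1
    refine ⟨fun δ => if hδ : (0:ℝ) < δ then
        min (δ/2) (min ((1/(2*((n:ℝ)+1))) / (3*(8/δ) + B0 (δ/4) (by linarith) + 3))
          ((δ/10)/(3*(8/δ)+4))) else 1,
      fun δ K => if hδ : (0:ℝ) < δ then
        K + 2*(B0 (δ/4) (by linarith)) + 4*(8/δ) + 3 else 1,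
      ?_, ?_, ?_⟩
    · intro δ hδ
      simp only [dif_pos hδ]
      have hB := hB0 (δ/4) (by linarith)
      have hsp : (0:ℝ) < 8/δ := by positivity
      have hn1 : (0:ℝ) < 1/(2*((n:ℝ)+1)) := by positivity
      exact lt_min (by linarith) (lt_min (div_pos hn1 (by linarith))
        (div_pos (by linarith) (by linarith)))
    · intro δ hδ K hK
      simp only [dif_pos hδ]
      have hB := hB0 (δ/4) (by linarith)
      have hsp : (0:ℝ) < 8/δ := by positivity
      linarith
    · intro S' hS' K hK δ hδmem A f hfPU hfLip hfCob
      have hδ : (0:ℝ) < δ := hδmem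
      have hδ4 : (0:ℝ) < δ/4 := by linarith
      simp only [dif_pos hδ] at hfLip
      rcases isEmpty_or_nonempty X with hX | hX
      · refine ⟨f, fun c _ => rfl, ?_, ?_, ?_⟩
        · intro x _; exact isEmptyElim x
        · intro x _; exact isEmptyElim x
        · intro v
          have hempty : {x : X | x ∈ Set.univ ∧ 0 < f x v} = ∅ :=
            Set.eq_empty_of_isEmpty _
          rw [hempty, show EMetric.diam (∅ : Set X) = 0 from EMetric.diam_empty]
          exact zero_le
      · haveI := hX
        have hXNat : Cardinal.aleph0 ≤ Cardinal.mk (X × ℕ) := Cardinal.aleph0_le_mk _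
        set hh : X → S → ℝ := h0 (δ/4) hδ4 with hh_def
        set B : ℝ := B0 (δ/4) hδ4 with hB_def
        have hBpos : 0 < B := hB0 _ _
        have hhPU : PartUnitySkelOn (n : ℕ∞) hh Set.univ := hPU0 (δ/4) hδ4
        have hhLip : LipschitzEpsOn (δ/4) hh Set.univ := hLip0 (δ/4) hδ4
        have hhCob : CoboundedOn B hh Set.univ := hCob0 (δ/4) hδ4
        have hhfin : ∀ x, (support (hh x)).Finite :=
          fun x => (hhPU x (Set.mem_univ x)).1.2.1
        have hVcard : Cardinal.mk ↥(⋃ x, support (hh x)) ≤ Cardinal.mk (X × ℕ) := by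
          rw [card_prod_nat]
          exact card_union_supports hh hhfin
        have hS'ne : Nonempty S' :=
          Cardinal.mk_ne_zero_iff.mp (ne_of_gt (lt_of_le_of_lt zero_le hS'))
        haveI := hS'ne
        have hsp : (0:ℝ) < 8/δ := by positivity
        rcases A.eq_empty_or_nonempty with hAe | hA
        · -- A empty : pure transport of hh
          obtain ⟨emb⟩ := (Cardinal.le_def _ _).mp (le_of_lt (lt_of_le_of_lt hVcard hS'))
          obtain ⟨g, hgPU, hgLip, hgCob⟩ :=
            core_empty n δ B (K + 2*B + 4*(8/δ) + 3) hδ hBpos (by linarith)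
              hh (fun t => emb t) emb.injective hhPU hhLip hhCob
          refine ⟨g, ?_, hgPU, hgLip, ?_⟩
          · intro c hc; rw [hAe] at hc; exact absurd hc (Set.notMem_empty c)
          · simp only [dif_pos hδ]
            exact hgCob
        · -- main case
          set W : Set S' := ⋃ (c : ↥A), support (f (c : X)) with hW_def
          have hWcard : Cardinal.mk ↥W ≤ Cardinal.mk (X × ℕ) := by
            refine le_trans (card_union_supports (fun c : ↥A => f (c : X))
              (fun c => (hfPU c c.prop).1.2.1)) ?_
            rw [card_prod_nat]
            exact mul_le_mul_left (Cardinal.mk_set_le _) _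
          have hWc : Cardinal.mk (X × ℕ) < Cardinal.mk ↥(Wᶜ) := by
            by_contra hc
            push_neg at hc
            have h1 := Cardinal.mk_sum_compl W
            have h2 : Cardinal.mk S' ≤ Cardinal.mk (X × ℕ) := by
              rw [← h1]
              calc Cardinal.mk ↥W + Cardinal.mk ↥(Wᶜ)
                  ≤ Cardinal.mk (X × ℕ) + Cardinal.mk (X × ℕ) := add_le_add hWcard hc
                _ = Cardinal.mk (X × ℕ) := Cardinal.add_eq_self hXNat
            exact absurd (lt_of_lt_of_le hS' h2) (lt_irrefl _)
          obtain ⟨emb⟩ := (Cardinal.le_def _ _).mp (le_of_lt (lt_of_le_of_lt hVcard hWc))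
          set e : ↥(⋃ x, support (hh x)) → S' := fun t => ((emb t : ↥(Wᶜ)) : S')
            with he_def
          have he_inj : Function.Injective e := by
            intro t1 t2 h12
            exact emb.injective (Subtype.ext h12)
          have he_W : ∀ t, ∀ c ∈ A, f c (e t) = 0 := by
            intro t c hc
            have hmem := (emb t).prop
            by_contra hfc
            apply hmem
            simp only [hW_def, Set.mem_iUnion]
            exact ⟨⟨c, hc⟩, hfc⟩
          set αv : ℝ := min (δ/2) (min ((1/(2*((n:ℝ)+1))) / (3*(8/δ) + B + 3))
            ((δ/10)/(3*(8/δ)+4))) with hαv_def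
          have hden1 : (0:ℝ) < 3*(8/δ) + B + 3 := by linarith
          have hden2 : (0:ℝ) < 3*(8/δ) + 4 := by linarith
          have hαv0 : 0 < αv := lt_min (by linarith)
            (lt_min (div_pos (by positivity) hden1) (div_pos (by linarith) hden2))
          have hαv1 : αv ≤ δ/2 := min_le_left _ _
          have hαv2 : αv * (3*(8/δ) + B + 3) ≤ 1/(2*((n:ℝ)+1)) :=
            (le_div_iff₀ hden1).mp ((min_le_right _ _).trans (min_le_left _ _))
          have hαv3 : αv * (3*(8/δ)+4) ≤ δ/10 :=
            (le_div_iff₀ hden2).mp ((min_le_right _ _).trans (min_le_right _ _))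
          have hfLip' : LipschitzEpsOn αv f A := hfLip
          obtain ⟨g, hgA, hgPU, hgLip, hgCob⟩ :=
            core n δ K B αv hδ hK hBpos hαv0 hαv1 hαv2 hαv3 A hA f hh e he_inj he_W
              hfPU hfLip' hfCob hhPU hhLip hhCob
          refine ⟨g, hgA, hgPU, hgLip, ?_⟩
          simp only [dif_pos hδ]
          exact hgCob
  · -- reverse direction
    rintro ⟨α, M, hα, hM, hdim⟩ ε hε
    obtain ⟨g, -, hgPU, hgLip, hgCob⟩ :=
      hdim S hS 1 one_pos ε (Set.mem_Ioi.mpr hε) ∅ (fun _ _ => 0)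
        (fun a ha => absurd ha (Set.notMem_empty a))
        (fun x hx => absurd hx (Set.notMem_empty x))
        (by
          intro v
          have hempty : {x : X | x ∈ (∅ : Set X) ∧ 0 < (fun (_ : X) (_ : S) => (0:ℝ)) x v}
              = ∅ := by simp
          rw [hempty, show EMetric.diam (∅ : Set X) = 0 from EMetric.diam_empty]
          exact zero_le)
    exact ⟨g, hgPU, hgLip, M ε 1, hM ε hε 1 one_pos, hgCob⟩
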